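/- The set K is contained in the topological boundary of its Λ-convex hull: K ⊆ ∂(K^Λ). In particular no point of K is an interior point of K^Λ. -/

import Mathlib

open Set

noncomputable section

/-- The state space `ℝ × ℝ² × ℝ²` of triples `(ρ, v, q)` (also written `(ρ, w, z)`). -/
abbrev St : Type := ℝ × (ℝ × ℝ) × (ℝ × ℝ)

/-- The wave cone `Λ = {(ρ, v, q) : ρ (v₁² + v₂² + ρ v₂) = 0}`. -/
def Lam : Set St := {A : St | A.1 * (A.2.1.1 ^ 2 + A.2.1.2 ^ 2 + A.1 * A.2.1.2) = 0}

/-- The constraint set `K = {(ρ, v, ρ v) : ρ ∈ ℝ, v ∈ ℝ²}`. -/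
def Kset : Set St := {A : St | A.2.2 = A.1 • A.2.1}

/-- The Euclidean norm on the state space `ℝ × ℝ² × ℝ² ≅ ℝ⁵`. -/
def enorm5 (A : St) : ℝ :=
  Real.sqrt (A.1 ^ 2 + A.2.1.1 ^ 2 + A.2.1.2 ^ 2 + A.2.2.1 ^ 2 + A.2.2.2 ^ 2)

/-- A function `f : ℝ⁵ → ℝ` is `Λ`-convex if along every wave-cone direction `B ∈ Λ` and
every base point `A`, the map `t ↦ f(A + t B)` is convex on `ℝ`. -/
def LamConvex (f : St → ℝ) : Prop :=
  ∀ A : St, ∀ B ∈ Lam, ConvexOn ℝ Set.univ (fun t : ℝ => f (A + t • B))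

/-- The `Λ`-convex hull of a set `S`: all points that cannot be separated from `S` by a
`Λ`-convex function. -/
def LamHull (S : Set St) : Set St :=
  {A : St | ∀ f : St → ℝ, LamConvex f → ∀ c : ℝ, (∀ C ∈ S, f C ≤ c) → f A ≤ c}


lemma affine_convexOn (b c : ℝ) : ConvexOn ℝ univ (fun t : ℝ => b * t + c) := by
  refine ⟨convex_univ, ?_⟩
  intro x _ y _ a b' _ _ hab
  simp only [smul_eq_mul]
  have : b * (a * x + b' * y) + c = a * (b * x + c) + b' * (b * y + c) := by
    linear_combination (-c) * hab
  exact le_of_eq this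

lemma quad_convexOn (a b c : ℝ) (ha : 0 ≤ a) :
    ConvexOn ℝ univ (fun t : ℝ => a * t ^ 2 + b * t + c) := by
  have h1 : ConvexOn ℝ univ (fun t : ℝ => a • (t ^ 2)) :=
    (even_two.convexOn_pow).smul ha
  have := (h1.add (affine_convexOn b c))
  have e : (fun t : ℝ => a * t ^ 2 + b * t + c) = ((fun t : ℝ => a • (t ^ 2)) + fun t : ℝ => b * t + c) := by
    funext t
    simp only [Pi.add_apply, smul_eq_mul]
    ring
  rw [e]
  exact this
/-- The separating function `f(ρ,v,q) = q₂ - ρ v₂`. -/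
def sepF (A : St) : ℝ := A.2.2.2 - A.1 * A.2.1.2

lemma sepF_lamConvex : LamConvex sepF := by
  intro A B hB
  have hB' : B.1 * (B.2.1.1 ^ 2 + B.2.1.2 ^ 2 + B.1 * B.2.1.2) = 0 := hB
  have ha : 0 ≤ -(B.1 * B.2.1.2) := by
    rcases eq_or_ne B.1 0 with h | h
    · simp [h]
    · have h2 : B.2.1.1 ^ 2 + B.2.1.2 ^ 2 + B.1 * B.2.1.2 = 0 := by
        rcases mul_eq_zero.1 hB' with h' | h'
        · exact absurd h' h
        · exact h'
      nlinarith [sq_nonneg B.2.1.1, sq_nonneg B.2.1.2]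
  have key : (fun t : ℝ => sepF (A + t • B)) =
      fun t : ℝ => (-(B.1 * B.2.1.2)) * t ^ 2
        + (B.2.2.2 - A.1 * B.2.1.2 - B.1 * A.2.1.2) * t + sepF A := by
    funext t
    simp only [sepF, Prod.fst_add, Prod.snd_add, Prod.smul_fst, Prod.smul_snd, smul_eq_mul]
    ring
  rw [key]
  exact quad_convexOn _ _ _ ha

lemma sepF_zero_on_K : ∀ C ∈ Kset, sepF C ≤ 0 := by
  intro C hC
  have h : C.2.2 = C.1 • C.2.1 := hC
  simp [sepF, h, Prod.smul_snd, smul_eq_mul]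

/-- `K` lies in the topological boundary of its `Λ`-convex hull; in particular no point
of `K` is an interior point of `K^Λ`. -/
theorem K_subset_frontier_lamHull :
    Kset ⊆ frontier (LamHull Kset) := by
  intro A hA
  have hmem : A ∈ LamHull Kset := fun f _ c hc => hc A hA
  rw [frontier, Set.mem_diff]
  refine ⟨subset_closure hmem, ?_⟩
  intro hint
  rw [mem_interior_iff_mem_nhds, Metric.mem_nhds_iff] at hint
  obtain ⟨ε, hε, hball⟩ := hint
  set P : St := (A.1, A.2.1, (A.2.2.1, A.2.2.2 + ε / 2)) with hP
  have hdist : dist P A < ε := by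
    have h1 : dist P A = ε / 2 := by
      simp only [hP, Prod.dist_eq, Real.dist_eq]
      simp
      linarith
    linarith
  have hPmem : P ∈ LamHull Kset := hball hdist
  have := hPmem sepF sepF_lamConvex 0 sepF_zero_on_K
  have hval : sepF P = sepF A + ε / 2 := by simp [sepF, hP]; ring
  have hA0 : sepF A = 0 := by
    have h : A.2.2 = A.1 • A.2.1 := hA
    simp [sepF, h, Prod.smul_snd, smul_eq_mul]
  rw [hval, hA0] at this
  linarith
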